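/- If X is a locally connected normal space with no compact component, then the one-point connectification Y = X ∪ {p} (topologized via the maximal FIP families D(C)) is a normal space: any two disjoint closed subsets of Y can be separated by disjoint open sets of Y. -/

import Mathlib

open Set

/-- A collection of sets has the finite intersection property if every finite
subcollection has nonempty intersection. -/
def FIP {α : Type*} (D : Set (Set α)) : Prop :=
  ∀ F ⊆ D, F.Finite → (⋂₀ F).Nonempty

/-- `D` is a maximal collection of closed subsets of `C` with the finite
intersection property and empty intersection. -/
def IsMaxFIPFamily {X : Type*} [TopologicalSpace X] (C : Set X) (D : Set (Set X)) : Prop :=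
  (∀ A ∈ D, IsClosed A ∧ A ⊆ C) ∧ FIP D ∧ ⋂₀ D = ∅ ∧
    ∀ D' : Set (Set X), (∀ A ∈ D', IsClosed A ∧ A ⊆ C) → FIP D' → ⋂₀ D' = ∅ →
      D ⊆ D' → D' = D

/-- The open sets of the one-point connectification `Y = X ∪ {p}`, modelled as
`Option X` with `p = none`: (I) sets not containing `none` whose trace on `X` is
open in `X`, and (II) sets containing `none` whose trace on `X` is open in `X`
and which contain (the image of) a member of `𝒟 C` for every connected
component `C` of `X`. -/
def OPOpens {X : Type*} [TopologicalSpace X] (𝒟 : Set X → Set (Set X)) :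
    Set (Set (Option X)) :=
  {U | (none ∉ U ∧ IsOpen (some ⁻¹' U)) ∨
       (none ∈ U ∧ IsOpen (some ⁻¹' U) ∧
         ∀ x : X, ∃ A ∈ 𝒟 (connectedComponent x), some '' A ⊆ U)}

lemma stmt_13_aux {X : Type*} [TopologicalSpace X] [NormalSpace X] [LocallyConnectedSpace X]
    (𝒟 : Set X → Set (Set X))
    (h𝒟 : ∀ x : X, IsMaxFIPFamily (connectedComponent x) (𝒟 (connectedComponent x)))
    (tY : TopologicalSpace (Option X))
    (hopen : ∀ U : Set (Option X), @IsOpen _ tY U ↔ U ∈ OPOpens 𝒟)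
    (F G : Set (Option X)) (hF : @IsClosed _ tY F) (hG : @IsClosed _ tY G)
    (hdisj : Disjoint F G) (hnG : none ∉ G) :
    ∃ U V : Set (Option X), @IsOpen _ tY U ∧ @IsOpen _ tY V ∧
      F ⊆ U ∧ G ⊆ V ∧ Disjoint U V := by
  -- preimages are closed in X
  have hpre : ∀ S : Set (Option X), @IsClosed _ tY S → IsClosed (some ⁻¹' S : Set X) := by
    intro S hS
    have h := (hopen Sᶜ).1 hS.isOpen_compl
    have ho : IsOpen (some ⁻¹' Sᶜ : Set X) := by
      rcases h with ⟨_, h⟩ | ⟨_, h, _⟩ <;> exact h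
    rw [Set.preimage_compl] at ho
    exact isOpen_compl_iff.mp ho
  have hF0 : IsClosed (some ⁻¹' F : Set X) := hpre F hF
  have hG0 : IsClosed (some ⁻¹' G : Set X) := hpre G hG
  have hFG0 : Disjoint (some ⁻¹' F : Set X) (some ⁻¹' G) := hdisj.preimage some
  -- the complement of G is an open neighborhood of `none`, giving members of 𝒟
  have hGc2 : ∀ x : X, ∃ A ∈ 𝒟 (connectedComponent x), some '' A ⊆ Gᶜ := by
    have h := (hopen Gᶜ).1 hG.isOpen_compl
    rcases h with ⟨h1, _⟩ | ⟨_, _, h3⟩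
    · exact absurd hnG h1
    · exact h3
  -- key separation for each potential component
  have key : ∀ C : Set X, ∃ U V : Set X, IsOpen U ∧ IsOpen V ∧
      some ⁻¹' F ⊆ U ∧ some ⁻¹' G ⊆ V ∧ Disjoint U V ∧
      ∀ x : X, connectedComponent x = C → ∃ A ∈ 𝒟 C, A ⊆ U := by
    intro C
    by_cases hC : ∃ x : X, connectedComponent x = C
    · obtain ⟨x, rfl⟩ := hC
      obtain ⟨A, hA𝒟, hAG⟩ := hGc2 x
      have hAclosed : IsClosed A := ((h𝒟 x).1 A hA𝒟).1
      have hAG' : Disjoint A (some ⁻¹' G) := by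
        rw [Set.disjoint_left]
        intro a ha hag
        exact hAG ⟨a, ha, rfl⟩ hag
      obtain ⟨U, V, hU, hV, hsubU, hsubV, hUV⟩ :=
        NormalSpace.normal (some ⁻¹' F ∪ A) (some ⁻¹' G) (hF0.union hAclosed) hG0
          (by rw [Set.disjoint_union_left]; exact ⟨hFG0, hAG'⟩)
      exact ⟨U, V, hU, hV, Set.subset_union_left.trans hsubU, hsubV, hUV,
        fun y _ => ⟨A, hA𝒟, Set.subset_union_right.trans hsubU⟩⟩
    · obtain ⟨U, V, hU, hV, hsubU, hsubV, hUV⟩ :=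
        NormalSpace.normal _ _ hF0 hG0 hFG0
      exact ⟨U, V, hU, hV, hsubU, hsubV, hUV, fun x hx => absurd ⟨x, hx⟩ hC⟩
  choose U V hU hV hFU hGV hUV hA using key
  set W : Set X := ⋃ x : X, connectedComponent x ∩ U (connectedComponent x) with hW
  set Z : Set X := ⋃ x : X, connectedComponent x ∩ V (connectedComponent x) with hZ
  have hWopen : IsOpen W := isOpen_iUnion fun x =>
    isOpen_connectedComponent.inter (hU _)
  have hZopen : IsOpen Z := isOpen_iUnion fun x =>
    isOpen_connectedComponent.inter (hV _)
  refine ⟨insert none (some '' W), some '' Z, ?_, ?_, ?_, ?_, ?_⟩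
  · -- openness of insert none (some '' W)
    rw [hopen]
    refine Or.inr ⟨Set.mem_insert _ _, ?_, ?_⟩
    · have : (some ⁻¹' insert none (some '' W) : Set X) = W := by
        ext a
        simp [Set.mem_insert_iff, Option.some_injective X |>.mem_set_image]
      rw [this]; exact hWopen
    · intro x
      obtain ⟨A, hA𝒟, hAU⟩ := hA (connectedComponent x) x rfl
      have hAC : A ⊆ connectedComponent x := ((h𝒟 x).1 A hA𝒟).2
      refine ⟨A, hA𝒟, ?_⟩
      rintro y ⟨a, ha, rfl⟩
      exact Set.mem_insert_of_mem _ ⟨a, Set.mem_iUnion.2 ⟨x, hAC ha, hAU ha⟩, rfl⟩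
  · -- openness of some '' Z
    rw [hopen]
    refine Or.inl ⟨by simp, ?_⟩
    have : (some ⁻¹' (some '' Z) : Set X) = Z :=
      Set.preimage_image_eq Z (Option.some_injective X)
    rw [this]; exact hZopen
  · -- F ⊆ ...
    intro y hy
    match y with
    | none => exact Set.mem_insert _ _
    | some x =>
      exact Set.mem_insert_of_mem _
        ⟨x, Set.mem_iUnion.2 ⟨x, mem_connectedComponent, hFU _ hy⟩, rfl⟩
  · -- G ⊆ ...
    intro y hy
    match y with
    | none => exact absurd hy hnG
    | some x =>
      exact ⟨x, Set.mem_iUnion.2 ⟨x, mem_connectedComponent, hGV _ hy⟩, rfl⟩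
  · -- disjointness
    rw [Set.disjoint_left]
    rintro y hyU ⟨z, hz, rfl⟩
    rcases hyU with h | ⟨w, hw, hwz⟩
    · exact Option.some_ne_none z h
    · have hwz' : w = z := Option.some_injective X hwz
      subst hwz'
      obtain ⟨x1, hx1⟩ := Set.mem_iUnion.1 hw
      obtain ⟨x2, hx2⟩ := Set.mem_iUnion.1 hz
      have e1 : connectedComponent w = connectedComponent x1 :=
        (connectedComponent_eq hx1.1).symm
      have e2 : connectedComponent w = connectedComponent x2 :=
        (connectedComponent_eq hx2.1).symm
      have : w ∈ V (connectedComponent x1) := by rw [← e1, e2]; exact hx2.2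
      exact Set.disjoint_left.mp (hUV (connectedComponent x1)) hx1.2 this

/-- If `X` is a locally connected normal space with no compact component, then the
one-point connectification `Y = X ∪ {p}` is normal: disjoint closed sets in `Y`
are separated by disjoint open sets in `Y`. -/
theorem stmt_13 {X : Type*} [TopologicalSpace X] [NormalSpace X] [LocallyConnectedSpace X]
    (𝒟 : Set X → Set (Set X))
    (hnc : ∀ x : X, ¬ IsCompact (connectedComponent x))
    (h𝒟 : ∀ x : X, IsMaxFIPFamily (connectedComponent x) (𝒟 (connectedComponent x)))
    (tY : TopologicalSpace (Option X))
    (hopen : ∀ U : Set (Option X), @IsOpen _ tY U ↔ U ∈ OPOpens 𝒟) :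
    ∀ F G : Set (Option X), @IsClosed _ tY F → @IsClosed _ tY G → Disjoint F G →
      ∃ U V : Set (Option X), @IsOpen _ tY U ∧ @IsOpen _ tY V ∧
        F ⊆ U ∧ G ⊆ V ∧ Disjoint U V := by
  intro F G hF hG hdisj
  by_cases hnG : none ∈ G
  · have hnF : none ∉ F := fun h => Set.disjoint_left.mp hdisj h hnG
    obtain ⟨V, U, hV, hU, hGV, hFU, hVU⟩ :=
      stmt_13_aux 𝒟 h𝒟 tY hopen G F hG hF hdisj.symm hnF
    exact ⟨U, V, hU, hV, hFU, hGV, hVU.symm⟩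
  · exact stmt_13_aux 𝒟 h𝒟 tY hopen F G hF hG hdisj hnG
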